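/- Let $X$ be a geodesic metric space, $Y$ a metric space, and $\{Z_i\}_{i=1}^{\infty}$ a countable family of sets covering $X$. Let $f\colon X\to Y$ be a continuous mapping whose restriction to each $Z_i$ is Lipschitz with Lipschitz constant at most $L$ for some fixed $L>0$. Then $f$ is Lipschitz on all of $X$ with Lipschitz constant at most $L$. -/

import Mathlib

open Set MeasureTheory Filter
open scoped Topology ENNReal NNReal

private lemma lipschitz_closure_aux {Y : Type*} [MetricSpace Y] {g : ℝ → Y} {s t : Set ℝ}
    {L : ℝ} (hst : s ⊆ t) (ht : IsClosed t) (hg : ContinuousOn g t)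
    (hb : ∀ a ∈ s, ∀ b ∈ s, dist (g a) (g b) ≤ L * |a - b|) :
    ∀ a ∈ closure s, ∀ b ∈ closure s, dist (g a) (g b) ≤ L * |a - b| := by
  set F : ℝ × ℝ → ℝ := fun p => dist (g p.1) (g p.2) - L * |p.1 - p.2| with hF
  have hcF : ContinuousOn F (t ×ˢ t) := by
    apply ContinuousOn.sub
    · exact continuous_dist.comp_continuousOn
        ((hg.comp continuous_fst.continuousOn fun p hp => hp.1).prodMk
          (hg.comp continuous_snd.continuousOn fun p hp => hp.2))
    · exact (continuous_const.mul ((continuous_fst.sub continuous_snd).abs)).continuousOn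
  have hclosed : IsClosed ((t ×ˢ t) ∩ F ⁻¹' Iic 0) :=
    hcF.preimage_isClosed_of_isClosed (ht.prod ht) isClosed_Iic
  have hsub : (s ×ˢ s) ⊆ (t ×ˢ t) ∩ F ⁻¹' Iic 0 := fun p hp =>
    ⟨⟨hst hp.1, hst hp.2⟩, by
      simp only [mem_preimage, mem_Iic, hF, sub_nonpos]
      exact hb _ hp.1 _ hp.2⟩
  intro a ha b hb'
  have hmem : (a, b) ∈ (t ×ˢ t) ∩ F ⁻¹' Iic 0 := by
    apply hclosed.closure_subset_iff.mpr hsub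
    rw [closure_prod_eq]
    exact ⟨ha, hb'⟩
  have := hmem.2
  simp only [mem_preimage, mem_Iic, hF, sub_nonpos] at this
  exact this

/-- the gluing lemma for Lipschitz mappings on geodesic spaces. -/
theorem lipschitz_of_countable_cover {X Y : Type*} [MetricSpace X] [MetricSpace Y]
    (geo : ∀ x y : X, ∃ c : ℝ → X, c 0 = x ∧ c (dist x y) = y ∧
      ∀ s ∈ Set.Icc (0:ℝ) (dist x y), ∀ t ∈ Set.Icc (0:ℝ) (dist x y),
        dist (c s) (c t) = |s - t|)
    (Z : ℕ → Set X) (hZ : (Set.univ : Set X) ⊆ ⋃ i, Z i)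
    (f : X → Y) (hf : Continuous f) (L : ℝ) (hL : 0 < L)
    (hLip : ∀ i : ℕ, ∀ x ∈ Z i, ∀ y ∈ Z i, dist (f x) (f y) ≤ L * dist x y) :
    ∀ x y : X, dist (f x) (f y) ≤ L * dist x y := by
  classical
  intro x y
  obtain ⟨c, hc0, hcd, hiso⟩ := geo x y
  set d : ℝ := dist x y with hdd
  have hd0 : 0 ≤ d := dist_nonneg
  -- the distance function along the geodesic
  set g : ℝ → Y := fun t => f (c t) with hg
  set h : ℝ → ℝ := fun t => dist (f x) (g t) with hh
  have h0 : h 0 = 0 := by simp [hh, hg, hc0]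
  have hDgoal : h d = dist (f x) (f y) := by simp [hh, hg, hcd]
  rcases le_or_gt (dist (f x) (f y)) 0 with hfd | hfd
  · exact hfd.trans (by positivity)
  -- continuity of c, g, h on Icc 0 d
  have hcc : ContinuousOn c (Icc 0 d) := by
    have : LipschitzOnWith 1 c (Icc 0 d) := by
      apply LipschitzOnWith.of_dist_le_mul
      intro s hs t ht
      rw [hiso s hs t ht, Real.dist_eq]
      simp
    exact this.continuousOn
  have hgc : ContinuousOn g (Icc 0 d) := hf.comp_continuousOn hcc
  have hhc : ContinuousOn h (Icc 0 d) := continuous_dist.comp_continuousOn (continuousOn_const.prodMk hgc)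
  -- the sets A i
  set B : ℕ → Set ℝ := fun i => c ⁻¹' (Z i) ∩ Icc 0 d with hB
  set A : ℕ → Set ℝ := fun i => closure (B i) with hA
  have hAsub : ∀ i, A i ⊆ Icc 0 d := fun i =>
    closure_minimal (inter_subset_right) isClosed_Icc
  have hAcover : Icc 0 d ⊆ ⋃ i, A i := by
    intro t htI
    obtain ⟨s, ⟨i, rfl⟩, hmem⟩ := hZ (mem_univ (c t))
    exact mem_iUnion.mpr ⟨i, subset_closure ⟨hmem, htI⟩⟩
  have hgA : ∀ i, ∀ a ∈ A i, ∀ b ∈ A i, dist (g a) (g b) ≤ L * |a - b| := by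
    intro i
    apply lipschitz_closure_aux (s := B i) (t := Icc 0 d) inter_subset_right isClosed_Icc hgc
    intro a ha b hb
    calc dist (g a) (g b) ≤ L * dist (c a) (c b) := hLip i _ ha.1 _ hb.1
    _ = L * |a - b| := by rw [hiso a ha.2 b hb.2]
  have hhA : ∀ i, LipschitzOnWith L.toNNReal h (A i) := by
    intro i
    apply LipschitzOnWith.of_dist_le_mul
    intro a ha b hb
    have h1 : dist (h a) (h b) ≤ dist (g a) (g b) := by
      rw [Real.dist_eq, hh]
      simpa [dist_comm] using abs_dist_sub_le (g a) (g b) (f x)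
    calc dist (h a) (h b) ≤ L * |a - b| := h1.trans (hgA i a ha b hb)
    _ = L.toNNReal * dist a b := by rw [Real.coe_toNNReal _ hL.le, Real.dist_eq]
  -- the "last hitting time" map
  set K : ℝ → Set ℝ := fun y' => Icc 0 d ∩ h ⁻¹' (Iic y') with hK
  set m : ℝ → ℝ := fun y' => sSup (K y') with hm
  have hKmem : ∀ y' ∈ Ico 0 (h d), m y' ∈ K y' := by
    intro y' hy'
    have hne : (0:ℝ) ∈ K y' := ⟨⟨le_refl 0, hd0⟩, by simp [h0, hy'.1]⟩
    have hbdd : BddAbove (K y') := ⟨d, fun t ht => ht.1.2⟩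
    exact (hhc.preimage_isClosed_of_isClosed isClosed_Icc isClosed_Iic).csSup_mem
      ⟨0, hne⟩ hbdd
  have hKval : ∀ y' ∈ Ico 0 (h d), h (m y') = y' := by
    intro y' hy'
    have hmem := hKmem y' hy'
    have hle : h (m y') ≤ y' := hmem.2
    rcases eq_or_lt_of_le hle with he | hlt
    · exact he
    exfalso
    have hmd : m y' < d := by
      rcases eq_or_lt_of_le hmem.1.2 with he | h'
      · exact absurd (he ▸ hlt) (not_lt.mpr hy'.2.le)
      · exact h'
    -- find t > m y' in Icc with h t < y'
    have hcw : ContinuousWithinAt h (Icc 0 d) (m y') := hhc _ hmem.1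
    have hev : ∀ᶠ t in 𝓝[Icc 0 d] (m y'), h t < y' :=
      hcw.eventually_lt_const hlt
    have hIoc : Ioc (m y') d ⊆ Icc 0 d := fun t ht => ⟨hmem.1.1.trans ht.1.le, ht.2⟩
    have hev2 : ∀ᶠ t in 𝓝[Ioc (m y') d] (m y'), h t < y' :=
      hev.filter_mono (nhdsWithin_mono _ hIoc)
    have hne2 : (𝓝[Ioc (m y') d] (m y')).NeBot := by
      rw [← mem_closure_iff_nhdsWithin_neBot, closure_Ioc hmd.ne]
      exact ⟨le_refl _, hmd.le⟩
    obtain ⟨t, htlt, htmem⟩ := (hev2.and (eventually_mem_nhdsWithin)).exists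
    have : t ≤ m y' := le_csSup ⟨d, fun u hu => hu.1.2⟩ ⟨hIoc htmem, le_of_lt htlt⟩
    exact absurd this (not_le.mpr htmem.1)
  have hmIcc : ∀ y' ∈ Ico 0 (h d), m y' ∈ Icc 0 d := fun y' hy' => (hKmem y' hy').1
  -- disjointified sets
  set D : ℕ → Set ℝ := fun i => A i \ ⋃ j < i, A j with hD
  have hDmeas : ∀ i, MeasurableSet (D i) := by
    intro i
    exact (isClosed_closure.measurableSet).diff
      (MeasurableSet.biUnion (to_countable _) fun j _ => isClosed_closure.measurableSet)
  have hDdisj : Pairwise (Function.onFun Disjoint D) := by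
    intro i j hij
    wlog hlt : i < j generalizing i j
    · exact (this hij.symm (by omega)).symm
    refine Set.disjoint_left.mpr fun t hti htj => ?_
    exact htj.2 (mem_iUnion₂.mpr ⟨i, hlt, hti.1⟩)
  -- the sets T i on the y-axis
  set T : ℕ → Set ℝ := fun i =>
    {y' ∈ Ico 0 (h d) | m y' ∈ A i ∧ ∀ j < i, m y' ∉ A j} with hT
  have hTcover : Ico 0 (h d) ⊆ ⋃ i, T i := by
    intro y' hy'
    have hex : ∃ i, m y' ∈ A i := mem_iUnion.mp (hAcover (hmIcc y' hy'))
    refine mem_iUnion.mpr ⟨Nat.find hex, hy', Nat.find_spec hex, fun j hj => ?_⟩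
    exact Nat.find_min hex hj
  have hTsub : ∀ i, T i ⊆ h '' (m '' T i) := by
    intro i y' hy'
    exact ⟨m y', ⟨y', hy', rfl⟩, hKval y' hy'.1⟩
  have hmT : ∀ i, m '' T i ⊆ D i := by
    rintro i t ⟨y', hy', rfl⟩
    exact ⟨hy'.2.1, fun hmem => by
      obtain ⟨j, hj, hjm⟩ := mem_iUnion₂.mp hmem
      exact hy'.2.2 j hj hjm⟩
  -- the measure computation
  have hmain : ENNReal.ofReal (h d) ≤ ENNReal.ofReal (L * d) := by
    calc ENNReal.ofReal (h d) = volume (Ico (0:ℝ) (h d)) := by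
          rw [Real.volume_Ico, sub_zero]
    _ ≤ volume (⋃ i, T i) := measure_mono hTcover
    _ ≤ ∑' i, volume (T i) := measure_iUnion_le T
    _ ≤ ∑' i, ENNReal.ofReal L * volume (D i) := by
          apply ENNReal.tsum_le_tsum
          intro i
          calc volume (T i) ≤ volume (h '' (m '' T i)) := measure_mono (hTsub i)
          _ = μH[1] (h '' (m '' T i)) := by rw [MeasureTheory.hausdorffMeasure_real]
          _ ≤ (L.toNNReal : ℝ≥0∞) ^ (1:ℝ) * μH[1] (m '' T i) := by
                apply LipschitzOnWith.hausdorffMeasure_image_le _ zero_le_one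
                exact (hhA i).mono (fun t ht => by
                  obtain ⟨y', hy', rfl⟩ := ht
                  exact hy'.2.1)
          _ = ENNReal.ofReal L * μH[1] (m '' T i) := by
                rw [ENNReal.rpow_one, ENNReal.ofReal]
          _ = ENNReal.ofReal L * volume (m '' T i) := by
                rw [MeasureTheory.hausdorffMeasure_real]
          _ ≤ ENNReal.ofReal L * volume (D i) := by
                exact mul_le_mul_right (measure_mono (hmT i)) _
    _ = ENNReal.ofReal L * ∑' i, volume (D i) := by rw [ENNReal.tsum_mul_left]
    _ = ENNReal.ofReal L * volume (⋃ i, D i) := by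
          rw [measure_iUnion hDdisj hDmeas]
    _ ≤ ENNReal.ofReal L * volume (Icc (0:ℝ) d) := by
          apply mul_le_mul_right
          apply measure_mono
          exact iUnion_subset fun i => (diff_subset).trans (hAsub i)
    _ = ENNReal.ofReal L * ENNReal.ofReal d := by rw [Real.volume_Icc, sub_zero]
    _ = ENNReal.ofReal (L * d) := by rw [ENNReal.ofReal_mul hL.le]
  rw [← hDgoal]
  have := (ENNReal.ofReal_le_ofReal_iff (by positivity)).mp hmain
  exact this
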